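/- Let f, g : [0,T) → ℝ solve the linear ODE system f' = β(1−f−g) + αg, g' = rβ(1−f−g) − αg with f(0) = g(0) = 0, where r, β, α are the equilibrium functions of the paper (β(t) = c·(1+r(t))²/(r(t)(1+2r(t))^{3/2}), α(t) = c·(1+r(t))²/((1+3r(t))(1+2r(t))^{3/2}), c = σ_w²r₀²(1+2r₀)^{3/2}/(σ_a²(1+r₀)²)). Then f(t) = 1 − (1+2r(t))^{3/2}/(r₀√(1+2r₀)(1+r(t))) + (1+r₀−r₀²)(1+2r(t))/(r₀(1+2r₀)(1+r(t))) and g(t) = ((1+2r(t))/(1+r(t)))·((1+r(t)−r(t)²)/(r₀√(1+2r₀)√(1+2r(t))) − (1+r₀−r₀²)/(r₀(1+2r₀))). -/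

import Mathlib

open Set

lemma sq32 (x : ℝ) (hx : 0 < x) : x ^ ((3:ℝ)/2) = x * Real.sqrt x := by
  rw [Real.sqrt_eq_rpow, show (3:ℝ)/2 = 1 + 1/2 by norm_num, Real.rpow_add hx, Real.rpow_one]

lemma sqrt_gt_one (x : ℝ) (hx : 0 < x) : 1 < Real.sqrt (1+2*x) :=
  (Real.lt_sqrt (by norm_num)).mpr (by nlinarith)

noncomputable def Fc (r₀ x : ℝ) : ℝ :=
  1 - (1+2*x)*Real.sqrt (1+2*x)/(r₀*Real.sqrt (1+2*r₀)*(1+x))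
    + (1+r₀-r₀^2)*(1+2*x)/(r₀*(1+2*r₀)*(1+x))

noncomputable def Gc (r₀ x : ℝ) : ℝ :=
  (1+2*x)/(1+x) * ((1+x-x^2)/(r₀*Real.sqrt (1+2*r₀)*Real.sqrt (1+2*x))
    - (1+r₀-r₀^2)/(r₀*(1+2*r₀)))

lemma Fc_init (r₀ : ℝ) (hr₀ : 0 < r₀) : Fc r₀ r₀ = 0 := by
  have h0 : (0:ℝ) < 1+2*r₀ := by linarith
  have hs : Real.sqrt (1+2*r₀) ^ 2 = 1+2*r₀ := Real.sq_sqrt h0.le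
  have hsp : 0 < Real.sqrt (1+2*r₀) := Real.sqrt_pos.mpr h0
  simp only [Fc]
  field_simp
  nlinarith [hs, hsp]

lemma Gc_init (r₀ : ℝ) (hr₀ : 0 < r₀) : Gc r₀ r₀ = 0 := by
  have h0 : (0:ℝ) < 1+2*r₀ := by linarith
  simp only [Gc]
  rw [show r₀*Real.sqrt (1+2*r₀)*Real.sqrt (1+2*r₀) = r₀*(1+2*r₀) by
    rw [mul_assoc, Real.mul_self_sqrt h0.le]]
  rw [sub_self, mul_zero]

set_option maxHeartbeats 1000000 in
lemma hasDerivAt_Fc (r₀ x : ℝ) (hx : 0 < x) (hr₀ : 0 < r₀) :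
    HasDerivAt (Fc r₀)
      (((1+r₀-r₀^2)/(r₀*(1+2*r₀)) - (2+x)*Real.sqrt (1+2*x)/(r₀*Real.sqrt (1+2*r₀)))/(1+x)^2) x := by
  have h12 : (0:ℝ) < 1+2*x := by linarith
  have h12r : (0:ℝ) < 1+2*r₀ := by linarith
  have hsp : 0 < Real.sqrt (1+2*x) := Real.sqrt_pos.mpr h12
  have hs0p : 0 < Real.sqrt (1+2*r₀) := Real.sqrt_pos.mpr h12r
  have h1 : HasDerivAt (fun y : ℝ => 1+2*y) (2*1) x := ((hasDerivAt_id x).const_mul 2).const_add 1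
  have h2 : HasDerivAt (fun y : ℝ => Real.sqrt (1+2*y)) (2*1/(2*Real.sqrt (1+2*x))) x :=
    h1.sqrt (ne_of_gt h12)
  have h3 := h1.mul h2
  have h4 : HasDerivAt (fun y : ℝ => r₀*Real.sqrt (1+2*r₀)*(1+y)) (r₀*Real.sqrt (1+2*r₀)*1) x :=
    ((hasDerivAt_id x).const_add 1).const_mul (r₀*Real.sqrt (1+2*r₀))
  have h5 := h3.div h4 (by positivity)
  have h6 := h1.const_mul (1+r₀-r₀^2)
  have h7 : HasDerivAt (fun y : ℝ => r₀*(1+2*r₀)*(1+y)) (r₀*(1+2*r₀)*1) x :=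
    ((hasDerivAt_id x).const_add 1).const_mul (r₀*(1+2*r₀))
  have h8 := h6.div h7 (by positivity)
  have hD := ((hasDerivAt_const x (1:ℝ)).sub h5).add h8
  refine hD.congr_deriv ?_
  symm
  simp only [Pi.mul_apply, Pi.div_apply, Pi.sub_apply]
  have hs2 : Real.sqrt (1+2*x) ^ 2 = 1+2*x := Real.sq_sqrt h12.le
  have hs02 : Real.sqrt (1+2*r₀) ^ 2 = 1+2*r₀ := Real.sq_sqrt h12r.le
  have hs1 : 1 < Real.sqrt (1+2*x) := sqrt_gt_one x hx
  have hs01 : 1 < Real.sqrt (1+2*r₀) := sqrt_gt_one r₀ hr₀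
  set s := Real.sqrt (1+2*x) with hsdef
  set s0 := Real.sqrt (1+2*r₀) with hs0def
  clear_value s s0
  clear hsdef hs0def hsp hs0p h1 h2 h3 h4 h5 h6 h7 h8 hD
  rw [(show (1:ℝ)+2*x = s^2 by linarith), (show (1:ℝ)+2*r₀ = s0^2 by linarith)]
  have hxe : x = (s^2-1)/2 := by linarith
  subst hxe
  have hre : r₀ = (s0^2-1)/2 := by linarith
  subst hre
  have hsne : s ≠ 0 := by linarith
  have hs0ne : s0 ≠ 0 := by linarith
  have h1 : s^2+1 ≠ 0 := by nlinarith
  have h2 : s0^2-1 ≠ 0 := by nlinarith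
  have h3 : s0^2+1 ≠ 0 := by nlinarith
  have h4 : (2:ℝ) + (s^2-1) ≠ 0 := by nlinarith
  field_simp
  ring

set_option maxHeartbeats 1000000 in
lemma hasDerivAt_Gc (r₀ x : ℝ) (hx : 0 < x) (hr₀ : 0 < r₀) :
    HasDerivAt (Gc r₀)
      (((1-5*x^2-3*x^3)/(r₀*Real.sqrt (1+2*r₀)*Real.sqrt (1+2*x))
        - (1+r₀-r₀^2)/(r₀*(1+2*r₀)))/(1+x)^2) x := by
  have h12 : (0:ℝ) < 1+2*x := by linarith
  have h12r : (0:ℝ) < 1+2*r₀ := by linarith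
  have hsp : 0 < Real.sqrt (1+2*x) := Real.sqrt_pos.mpr h12
  have hs0p : 0 < Real.sqrt (1+2*r₀) := Real.sqrt_pos.mpr h12r
  have h1 : HasDerivAt (fun y : ℝ => 1+2*y) (2*1) x := ((hasDerivAt_id x).const_mul 2).const_add 1
  have h1x : HasDerivAt (fun y : ℝ => 1+y) 1 x := (hasDerivAt_id x).const_add 1
  have h2 : HasDerivAt (fun y : ℝ => Real.sqrt (1+2*y)) (2*1/(2*Real.sqrt (1+2*x))) x :=
    h1.sqrt (ne_of_gt h12)
  have hq := h1.div h1x (by positivity)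
  have hnum : HasDerivAt (fun y : ℝ => 1+y-y^2) (1 - ↑(2:ℕ)*x^(2-1)) x :=
    h1x.sub (hasDerivAt_pow 2 x)
  have hden : HasDerivAt (fun y : ℝ => r₀*Real.sqrt (1+2*r₀)*Real.sqrt (1+2*y))
      (r₀*Real.sqrt (1+2*r₀)*(2*1/(2*Real.sqrt (1+2*x)))) x :=
    h2.const_mul (r₀*Real.sqrt (1+2*r₀))
  have hT1 := hnum.div hden (by positivity)
  have hB := hasDerivAt_const x ((1+r₀-r₀^2)/(r₀*(1+2*r₀)))
  have hD := hq.mul (hT1.sub hB)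
  refine hD.congr_deriv ?_
  symm
  simp only [Pi.mul_apply, Pi.div_apply, Pi.sub_apply]
  have hs2 : Real.sqrt (1+2*x) ^ 2 = 1+2*x := Real.sq_sqrt h12.le
  have hs02 : Real.sqrt (1+2*r₀) ^ 2 = 1+2*r₀ := Real.sq_sqrt h12r.le
  have hs1 : 1 < Real.sqrt (1+2*x) := sqrt_gt_one x hx
  have hs01 : 1 < Real.sqrt (1+2*r₀) := sqrt_gt_one r₀ hr₀
  set s := Real.sqrt (1+2*x) with hsdef
  set s0 := Real.sqrt (1+2*r₀) with hs0def
  clear_value s s0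
  clear hsdef hs0def hsp hs0p h1 h1x h2 hq hnum hden hT1 hD
  rw [(show (1:ℝ)+2*x = s^2 by linarith), (show (1:ℝ)+2*r₀ = s0^2 by linarith)]
  have hxe : x = (s^2-1)/2 := by linarith
  subst hxe
  have hre : r₀ = (s0^2-1)/2 := by linarith
  subst hre
  have hsne : s ≠ 0 := by linarith
  have hs0ne : s0 ≠ 0 := by linarith
  have h1 : s^2+1 ≠ 0 := by nlinarith
  have h2 : s0^2-1 ≠ 0 := by nlinarith
  have h3 : s0^2+1 ≠ 0 := by nlinarith
  have h4 : (2:ℝ) + (s^2-1) ≠ 0 := by nlinarith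
  field_simp
  ring

set_option maxHeartbeats 2000000 in
lemma identF (c r₀ x : ℝ) (hx : 0 < x) (hr₀ : 0 < r₀) :
    c * ((1+x)^2 / (x * ((1+2*x) * Real.sqrt (1+2*x)))) * (1 - Fc r₀ x - Gc r₀ x)
      + c * ((1+x)^2 / ((1+3*x) * ((1+2*x) * Real.sqrt (1+2*x)))) * Gc r₀ x
    = (((1+r₀-r₀^2)/(r₀*(1+2*r₀)) - (2+x)*Real.sqrt (1+2*x)/(r₀*Real.sqrt (1+2*r₀)))/(1+x)^2)
        * (-(c*(1+x)^3/((1+3*x)*Real.sqrt (1+2*x)))) := by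
  have h12 : (0:ℝ) < 1+2*x := by linarith
  have h12r : (0:ℝ) < 1+2*r₀ := by linarith
  simp only [Fc, Gc]
  have hs2 : Real.sqrt (1+2*x) ^ 2 = 1+2*x := Real.sq_sqrt h12.le
  have hs02 : Real.sqrt (1+2*r₀) ^ 2 = 1+2*r₀ := Real.sq_sqrt h12r.le
  have hs1 : 1 < Real.sqrt (1+2*x) := sqrt_gt_one x hx
  have hs01 : 1 < Real.sqrt (1+2*r₀) := sqrt_gt_one r₀ hr₀
  set s := Real.sqrt (1+2*x) with hsdef
  set s0 := Real.sqrt (1+2*r₀) with hs0def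
  clear_value s s0
  clear hsdef hs0def
  rw [(show (1:ℝ)+2*x = s^2 by linarith), (show (1:ℝ)+2*r₀ = s0^2 by linarith)]
  have hxe : x = (s^2-1)/2 := by linarith
  subst hxe
  have hre : r₀ = (s0^2-1)/2 := by linarith
  subst hre
  have hsne : s ≠ 0 := by linarith
  have hs0ne : s0 ≠ 0 := by linarith
  have h1 : s^2+1 ≠ 0 := by nlinarith
  have h2 : s0^2-1 ≠ 0 := by nlinarith
  have h3 : s0^2+1 ≠ 0 := by nlinarith
  have h4 : (2:ℝ) + (s^2-1) ≠ 0 := by nlinarith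
  have h5 : s^2-1 ≠ 0 := by nlinarith
  have h6 : (1:ℝ)+3*((s^2-1)/2) ≠ 0 := by nlinarith
  have h7 : 3*s^2-1 ≠ 0 := by nlinarith
  have h8 : -1+3*s^2 ≠ 0 := by nlinarith
  have h9 : (2:ℝ)+(s^2-1)*3 ≠ 0 := by nlinarith
  have h10 : (2:ℝ)+3*(s^2-1) ≠ 0 := by nlinarith
  field_simp
  ring

set_option maxHeartbeats 2000000 in
lemma identG (c r₀ x : ℝ) (hx : 0 < x) (hr₀ : 0 < r₀) :
    x * (c * ((1+x)^2 / (x * ((1+2*x) * Real.sqrt (1+2*x))))) * (1 - Fc r₀ x - Gc r₀ x)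
      - c * ((1+x)^2 / ((1+3*x) * ((1+2*x) * Real.sqrt (1+2*x)))) * Gc r₀ x
    = (((1-5*x^2-3*x^3)/(r₀*Real.sqrt (1+2*r₀)*Real.sqrt (1+2*x))
        - (1+r₀-r₀^2)/(r₀*(1+2*r₀)))/(1+x)^2)
        * (-(c*(1+x)^3/((1+3*x)*Real.sqrt (1+2*x)))) := by
  have h12 : (0:ℝ) < 1+2*x := by linarith
  have h12r : (0:ℝ) < 1+2*r₀ := by linarith
  simp only [Fc, Gc]
  have hs2 : Real.sqrt (1+2*x) ^ 2 = 1+2*x := Real.sq_sqrt h12.le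
  have hs02 : Real.sqrt (1+2*r₀) ^ 2 = 1+2*r₀ := Real.sq_sqrt h12r.le
  have hs1 : 1 < Real.sqrt (1+2*x) := sqrt_gt_one x hx
  have hs01 : 1 < Real.sqrt (1+2*r₀) := sqrt_gt_one r₀ hr₀
  set s := Real.sqrt (1+2*x) with hsdef
  set s0 := Real.sqrt (1+2*r₀) with hs0def
  clear_value s s0
  clear hsdef hs0def
  rw [(show (1:ℝ)+2*x = s^2 by linarith), (show (1:ℝ)+2*r₀ = s0^2 by linarith)]
  have hxe : x = (s^2-1)/2 := by linarith
  subst hxe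
  have hre : r₀ = (s0^2-1)/2 := by linarith
  subst hre
  have hsne : s ≠ 0 := by linarith
  have hs0ne : s0 ≠ 0 := by linarith
  have h1 : s^2+1 ≠ 0 := by nlinarith
  have h2 : s0^2-1 ≠ 0 := by nlinarith
  have h3 : s0^2+1 ≠ 0 := by nlinarith
  have h4 : (2:ℝ) + (s^2-1) ≠ 0 := by nlinarith
  have h5 : s^2-1 ≠ 0 := by nlinarith
  have h6 : (1:ℝ)+3*((s^2-1)/2) ≠ 0 := by nlinarith
  have h7 : 3*s^2-1 ≠ 0 := by nlinarith
  have h8 : -1+3*s^2 ≠ 0 := by nlinarith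
  have h9 : (2:ℝ)+(s^2-1)*3 ≠ 0 := by nlinarith
  have h10 : (2:ℝ)+3*(s^2-1) ≠ 0 := by nlinarith
  field_simp
  ring

lemma lip_aux {a b M N D x1 x2 y1 y2 : ℝ} (ha : |a| ≤ M) (hb : |b| ≤ N)
    (h1 : |x1-y1| ≤ D) (h2 : |x2-y2| ≤ D) :
    |(a*(1-x1-x2)+b*x2) - (a*(1-y1-y2)+b*y2)| ≤ (2*M+N)*D := by
  have hD : 0 ≤ D := le_trans (abs_nonneg _) h1
  have hM : 0 ≤ M := le_trans (abs_nonneg _) ha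
  have hN : 0 ≤ N := le_trans (abs_nonneg _) hb
  have h1' : |y1-x1| ≤ D := by rw [abs_sub_comm]; exact h1
  have h2' : |y2-x2| ≤ D := by rw [abs_sub_comm]; exact h2
  have e : (a*(1-x1-x2)+b*x2) - (a*(1-y1-y2)+b*y2)
      = a*(y1-x1) + a*(y2-x2) + b*(x2-y2) := by ring
  rw [e]
  calc |a*(y1-x1) + a*(y2-x2) + b*(x2-y2)|
      ≤ |a*(y1-x1) + a*(y2-x2)| + |b*(x2-y2)| := abs_add_le _ _
    _ ≤ |a*(y1-x1)| + |a*(y2-x2)| + |b*(x2-y2)| := by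
        linarith [abs_add_le (a*(y1-x1)) (a*(y2-x2))]
    _ = |a| * |y1-x1| + |a| * |y2-x2| + |b| * |x2-y2| := by rw [abs_mul, abs_mul, abs_mul]
    _ ≤ M*D + M*D + N*D := by
        have t1 : |a| * |y1-x1| ≤ M*D := mul_le_mul ha h1' (abs_nonneg _) hM
        have t2 : |a| * |y2-x2| ≤ M*D := mul_le_mul ha h2' (abs_nonneg _) hM
        have t3 : |b| * |x2-y2| ≤ N*D := mul_le_mul hb h2 (abs_nonneg _) hN
        linarith
    _ = (2*M+N)*D := by ring
set_option maxHeartbeats 2000000 in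
theorem stmt_14 (T r₀ σa σw : ℝ) (hT : 0 < T) (hr₀ : 0 < r₀) (hσa : 0 < σa)
    (hσw : 0 < σw)
    (c : ℝ) (hc : c = σw ^ 2 * r₀ ^ 2 * (1 + 2 * r₀) ^ ((3 : ℝ) / 2) /
      (σa ^ 2 * (1 + r₀) ^ 2))
    (r S1 β α f g : ℝ → ℝ)
    (hr0 : r 0 = r₀)
    (hrange : ∀ t ∈ Set.Ico 0 T, r t ∈ Set.Ioc 0 r₀)
    (hS1 : ∀ t, S1 t = σa ^ 2 * (1 + 2 * r t) ^ ((3 : ℝ) / 2) * r t ^ 2 * (1 + r₀) ^ 2 /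
        ((1 + r t) ^ 2 * r₀ ^ 2 * (1 + 2 * r₀) ^ ((3 : ℝ) / 2)))
    (hrODE : ∀ t ∈ Set.Ico 0 T,
      HasDerivAt r
        (-(σw ^ 2 * r t ^ 2 * (1 + r t) * (1 + 2 * r t) / ((1 + 3 * r t) * S1 t))) t)
    (hβ : ∀ t, β t = c * ((1 + r t) ^ 2 / (r t * (1 + 2 * r t) ^ ((3 : ℝ) / 2))))
    (hα : ∀ t, α t = c * ((1 + r t) ^ 2 /
        ((1 + 3 * r t) * (1 + 2 * r t) ^ ((3 : ℝ) / 2))))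
    (hf0 : f 0 = 0) (hg0 : g 0 = 0)
    (hfODE : ∀ t ∈ Set.Ico 0 T,
      HasDerivAt f (β t * (1 - f t - g t) + α t * g t) t)
    (hgODE : ∀ t ∈ Set.Ico 0 T,
      HasDerivAt g (r t * β t * (1 - f t - g t) - α t * g t) t) :
    ∀ t ∈ Set.Ico 0 T,
      f t = 1 - (1 + 2 * r t) ^ ((3 : ℝ) / 2) /
            (r₀ * Real.sqrt (1 + 2 * r₀) * (1 + r t)) +
          (1 + r₀ - r₀ ^ 2) * (1 + 2 * r t) / (r₀ * (1 + 2 * r₀) * (1 + r t)) ∧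
      g t = (1 + 2 * r t) / (1 + r t) *
          ((1 + r t - r t ^ 2) / (r₀ * Real.sqrt (1 + 2 * r₀) * Real.sqrt (1 + 2 * r t)) -
            (1 + r₀ - r₀ ^ 2) / (r₀ * (1 + 2 * r₀))) := by
  have h12r : (0:ℝ) < 1 + 2 * r₀ := by linarith
  have hcpos : 0 < c := by
    have := Real.rpow_pos_of_pos h12r ((3:ℝ)/2)
    rw [hc]; positivity
  -- clean form of the r ODE
  have hr'' : ∀ τ ∈ Ico 0 T,
      HasDerivAt r (-(c * (1 + r τ) ^ 3 / ((1 + 3 * r τ) * Real.sqrt (1 + 2 * r τ)))) τ := by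
    intro τ hτ
    obtain ⟨hρ1, hρ2⟩ := hrange τ hτ
    have h := hrODE τ hτ
    rw [hS1] at h
    have h12 : (0:ℝ) < 1 + 2 * r τ := by linarith
    have hsp : 0 < Real.sqrt (1 + 2 * r τ) := Real.sqrt_pos.mpr h12
    have hs0p : 0 < Real.sqrt (1 + 2 * r₀) := Real.sqrt_pos.mpr h12r
    have e : -(σw ^ 2 * r τ ^ 2 * (1 + r τ) * (1 + 2 * r τ) /
          ((1 + 3 * r τ) * (σa ^ 2 * (1 + 2 * r τ) ^ ((3 : ℝ) / 2) * r τ ^ 2 * (1 + r₀) ^ 2 /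
            ((1 + r τ) ^ 2 * r₀ ^ 2 * (1 + 2 * r₀) ^ ((3 : ℝ) / 2)))))
        = -(c * (1 + r τ) ^ 3 / ((1 + 3 * r τ) * Real.sqrt (1 + 2 * r τ))) := by
      rw [hc, sq32 _ h12, sq32 _ h12r]
      have h3x : (0:ℝ) < 1 + 3 * r τ := by linarith
      have h1x : (0:ℝ) < 1 + r τ := by linarith
      have h1r : (0:ℝ) < 1 + r₀ := by linarith
      field_simp
    rw [e] at h
    exact h
  -- candidate solutions satisfy the same ODEs
  have keyF : ∀ τ ∈ Ico 0 T,
      HasDerivAt (fun u => Fc r₀ (r u))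
        (β τ * (1 - Fc r₀ (r τ) - Gc r₀ (r τ)) + α τ * Gc r₀ (r τ)) τ := by
    intro τ hτ
    obtain ⟨hρ1, hρ2⟩ := hrange τ hτ
    have h12 : (0:ℝ) < 1 + 2 * r τ := by linarith
    have hD := (hasDerivAt_Fc r₀ (r τ) hρ1 hr₀).comp τ (hr'' τ hτ)
    rw [hβ, hα, sq32 _ h12, identF c r₀ (r τ) hρ1 hr₀]
    exact hD
  have keyG : ∀ τ ∈ Ico 0 T,
      HasDerivAt (fun u => Gc r₀ (r u))
        (r τ * β τ * (1 - Fc r₀ (r τ) - Gc r₀ (r τ)) - α τ * Gc r₀ (r τ)) τ := by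
    intro τ hτ
    obtain ⟨hρ1, hρ2⟩ := hrange τ hτ
    have h12 : (0:ℝ) < 1 + 2 * r τ := by linarith
    have hD := (hasDerivAt_Gc r₀ (r τ) hρ1 hr₀).comp τ (hr'' τ hτ)
    rw [hβ, hα, sq32 _ h12, identG c r₀ (r τ) hρ1 hr₀]
    exact hD
  intro t ht
  have hsub : Icc 0 t ⊆ Ico 0 T := fun u hu => ⟨hu.1, lt_of_le_of_lt hu.2 ht.2⟩
  -- minimum of r on [0, t]
  have hrc : ContinuousOn r (Icc 0 t) := fun u hu =>
    ((hr'' u (hsub hu)).continuousAt).continuousWithinAt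
  obtain ⟨u₀, hu₀m, hminOn⟩ := isCompact_Icc.exists_isMinOn (nonempty_Icc.mpr ht.1) hrc
  have hmin : ∀ u ∈ Icc 0 t, r u₀ ≤ r u := fun u hu => hminOn hu
  have hm : 0 < r u₀ := (hrange u₀ (hsub hu₀m)).1
  set m := r u₀ with hmdef
  set Mβ := c * (1 + r₀) ^ 2 / m with hMβdef
  set Mα := c * (1 + r₀) ^ 2 with hMαdef
  have hMβ0 : 0 ≤ Mβ := by positivity
  have hMα0 : 0 ≤ Mα := by positivity
  have hOne : ∀ u ∈ Icc 0 t, 1 ≤ (1 + 2 * r u) ^ ((3:ℝ)/2) := by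
    intro u hu
    have h1 := (hrange u (hsub hu)).1
    rw [sq32 _ (by linarith)]
    nlinarith [sqrt_gt_one (r u) h1]
  have hβb : ∀ u ∈ Icc 0 t, |β u| ≤ Mβ := by
    intro u hu
    obtain ⟨h1, h2⟩ := hrange u (hsub hu)
    have hP1 := hOne u hu
    have hmu : m ≤ r u := hmin u hu
    have hPpos : (0:ℝ) < (1 + 2 * r u) ^ ((3:ℝ)/2) := by linarith
    rw [hβ, abs_of_nonneg (by positivity), ← mul_div_assoc]
    rw [div_le_div_iff₀ (by positivity) hm]
    have hA : c * (1 + r u) ^ 2 ≤ c * (1 + r₀) ^ 2 := by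
      nlinarith [mul_nonneg (mul_nonneg hcpos.le (sub_nonneg.2 h2))
        (by linarith : (0:ℝ) ≤ 2 + r₀ + r u)]
    have hB : m ≤ r u * (1 + 2 * r u) ^ ((3:ℝ)/2) := by nlinarith
    nlinarith [mul_le_mul hA hB hm.le (by positivity : (0:ℝ) ≤ c * (1 + r₀) ^ 2)]
  have hαb : ∀ u ∈ Icc 0 t, |α u| ≤ Mα := by
    intro u hu
    obtain ⟨h1, h2⟩ := hrange u (hsub hu)
    have hP1 := hOne u hu
    have hPpos : (0:ℝ) < (1 + 2 * r u) ^ ((3:ℝ)/2) := by linarith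
    have h3x : (0:ℝ) < 1 + 3 * r u := by linarith
    rw [hα, abs_of_nonneg (by positivity), ← mul_div_assoc]
    rw [div_le_iff₀ (by positivity)]
    have hD1 : 1 ≤ (1 + 3 * r u) * (1 + 2 * r u) ^ ((3:ℝ)/2) := by nlinarith
    have hA : c * (1 + r u) ^ 2 ≤ c * (1 + r₀) ^ 2 := by
      nlinarith [mul_nonneg (mul_nonneg hcpos.le (sub_nonneg.2 h2))
        (by linarith : (0:ℝ) ≤ 2 + r₀ + r u)]
    nlinarith
  have hrβb : ∀ u ∈ Icc 0 t, |r u * β u| ≤ r₀ * Mβ := by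
    intro u hu
    obtain ⟨h1, h2⟩ := hrange u (hsub hu)
    rw [abs_mul, abs_of_nonneg h1.le]
    exact mul_le_mul h2 (hβb u hu) (abs_nonneg _) hr₀.le
  set Kb := 2 * Mβ + 2 * (r₀ * Mβ) + Mα with hKbdef
  have hKb1 : 2 * Mβ + Mα ≤ Kb := by nlinarith
  have hKb2 : 2 * (r₀ * Mβ) + Mα ≤ Kb := by nlinarith
  set K : NNReal := Real.toNNReal Kb with hKdef
  have hKcoe : Kb ≤ (K : ℝ) := by
    rw [hKdef, Real.coe_toNNReal']
    exact le_max_left _ _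
  set v : ℝ → ℝ × ℝ → ℝ × ℝ := fun u p =>
    if u ∈ Icc (0:ℝ) t then
      (β u * (1 - p.1 - p.2) + α u * p.2, r u * β u * (1 - p.1 - p.2) - α u * p.2)
    else 0 with hvdef
  have hvlip : ∀ u, LipschitzWith K (v u) := by
    intro u
    by_cases hu : u ∈ Icc (0:ℝ) t
    · apply LipschitzWith.of_dist_le_mul
      intro p q
      have hd1 : |p.1 - q.1| ≤ dist p q := by
        rw [Prod.dist_eq, ← Real.dist_eq]; exact le_max_left _ _
      have hd2 : |p.2 - q.2| ≤ dist p q := by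
        rw [Prod.dist_eq, ← Real.dist_eq]; exact le_max_right _ _
      have hdnn : 0 ≤ dist p q := dist_nonneg
      simp only [hvdef, if_pos hu]
      rw [Prod.dist_eq]
      apply max_le
      · rw [Real.dist_eq]
        calc |(β u * (1 - p.1 - p.2) + α u * p.2) - (β u * (1 - q.1 - q.2) + α u * q.2)|
            ≤ (2 * Mβ + Mα) * dist p q := lip_aux (hβb u hu) (hαb u hu) hd1 hd2
          _ ≤ (K : ℝ) * dist p q := by nlinarith
      · rw [Real.dist_eq]
        have e1 : r u * β u * (1 - p.1 - p.2) - α u * p.2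
            = (r u * β u) * (1 - p.1 - p.2) + (-α u) * p.2 := by ring
        have e2 : r u * β u * (1 - q.1 - q.2) - α u * q.2
            = (r u * β u) * (1 - q.1 - q.2) + (-α u) * q.2 := by ring
        rw [e1, e2]
        have hαb' : |-α u| ≤ Mα := by rw [abs_neg]; exact hαb u hu
        calc |((r u * β u) * (1 - p.1 - p.2) + (-α u) * p.2)
              - ((r u * β u) * (1 - q.1 - q.2) + (-α u) * q.2)|
            ≤ (2 * (r₀ * Mβ) + Mα) * dist p q := lip_aux (hrβb u hu) hαb' hd1 hd2
          _ ≤ (K : ℝ) * dist p q := by nlinarith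
    · simp only [hvdef, if_neg hu]
      exact (LipschitzWith.const' (0 : ℝ × ℝ))
  have hPc : ContinuousOn (fun u => (f u, g u)) (Icc 0 t) := fun u hu =>
    (((hfODE u (hsub hu)).continuousAt).prodMk ((hgODE u (hsub hu)).continuousAt)).continuousWithinAt
  have hQc : ContinuousOn (fun u => (Fc r₀ (r u), Gc r₀ (r u))) (Icc 0 t) := fun u hu =>
    (((keyF u (hsub hu)).continuousAt).prodMk ((keyG u (hsub hu)).continuousAt)).continuousWithinAt
  have hP' : ∀ u ∈ Ico 0 t,
      HasDerivWithinAt (fun u => (f u, g u)) (v u ((fun u => (f u, g u)) u)) (Ici u) u := by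
    intro u hu
    have huI : u ∈ Icc (0:ℝ) t := Ico_subset_Icc_self hu
    have h := (hfODE u (hsub huI)).prodMk (hgODE u (hsub huI))
    have e : v u (f u, g u)
        = (β u * (1 - f u - g u) + α u * g u, r u * β u * (1 - f u - g u) - α u * g u) := by
      simp only [hvdef, if_pos huI]
    simpa [e] using h.hasDerivWithinAt
  have hQ' : ∀ u ∈ Ico 0 t,
      HasDerivWithinAt (fun u => (Fc r₀ (r u), Gc r₀ (r u)))
        (v u ((fun u => (Fc r₀ (r u), Gc r₀ (r u))) u)) (Ici u) u := by
    intro u hu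
    have huI : u ∈ Icc (0:ℝ) t := Ico_subset_Icc_self hu
    have h := (keyF u (hsub huI)).prodMk (keyG u (hsub huI))
    have e : v u (Fc r₀ (r u), Gc r₀ (r u))
        = (β u * (1 - Fc r₀ (r u) - Gc r₀ (r u)) + α u * Gc r₀ (r u),
           r u * β u * (1 - Fc r₀ (r u) - Gc r₀ (r u)) - α u * Gc r₀ (r u)) := by
      simp only [hvdef, if_pos huI]
    simpa [e] using h.hasDerivWithinAt
  have hinit : (fun u => (f u, g u)) 0 = (fun u => (Fc r₀ (r u), Gc r₀ (r u))) 0 := by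
    simp only [hf0, hg0, hr0, Fc_init r₀ hr₀, Gc_init r₀ hr₀]
  have hEq := ODE_solution_unique hvlip hPc hP' hQc hQ' hinit
  have hend := hEq (right_mem_Icc.mpr ht.1)
  have hft : f t = Fc r₀ (r t) := congrArg Prod.fst hend
  have hgt : g t = Gc r₀ (r t) := congrArg Prod.snd hend
  have h12 : (0:ℝ) < 1 + 2 * r t := by linarith [(hrange t ht).1]
  constructor
  · rw [sq32 _ h12]
    simp only [Fc] at hft
    exact hft
  · simp only [Gc] at hgt
    exact hgt
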